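/- Let n ≥ 3 and let k_1,…,k_n ≥ 1 be integers. In the toroidal grid C_{6k_1}□⋯□C_{6k_{n−1}}□C_{3k_n} there exists a set S of vertices such that: (a) every connected component of the subgraph induced by S is either the image under coordinatewise reduction of a translate of a fixed binary (n−1)-cube {v ∈ ℤ^n : v_i ∈ {0,1} for i ∈ A, v_j = 0 for j ∉ A} (A a fixed (n−1)-subset of coordinates) or a single vertex, both kinds occurring; (b) the torus truncated spheres of radius 1 around the (n−1)-cube components together with the torus truncated spheres of radius n−2 around the singleton components form a partition of the vertex set; (c) every vertex u has a unique nearest vertex (in torus truncated distance) in the component whose sphere contains u. -/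

import Mathlib

/-- The toroidal grid `C_{m 0} □ ⋯ □ C_{m (n-1)}`: two vertices are adjacent iff they
differ in exactly one coordinate, by `±1` there. -/
def torusGraph (n : ℕ) (m : Fin n → ℕ) : SimpleGraph (Π i, ZMod (m i)) where
  Adj u v := u ≠ v ∧ ∃ i, (v i = u i + 1 ∨ v i = u i - 1) ∧ ∀ j, j ≠ i → u j = v j
  symm := by
    constructor
    rintro u v ⟨hne, i, hi, hj⟩
    refine ⟨hne.symm, i, ?_, fun j hj' => (hj j hj').symm⟩
    rcases hi with h | h
    · right; rw [h]; ring
    · left; rw [h]; ring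
  loopless := by
    constructor
    rintro u ⟨hne, -⟩
    exact hne rfl

/-- The torus truncated distance (valued in `ℕ`). -/
def ttrho (n : ℕ) (m : Fin n → ℕ) (u v : Π i, ZMod (m i)) : ℕ :=
  if ∀ i, u i = v i ∨ u i - v i = 1 ∨ u i - v i = -1 then
    (Finset.univ.filter fun i => u i ≠ v i).card
  else n + 1

/-- Torus truncated distance from a point to a set. -/
noncomputable def ttrhoSet (n : ℕ) (m : Fin n → ℕ) (u : Π i, ZMod (m i))
    (S : Set (Π i, ZMod (m i))) : ℕ :=
  sInf {d | ∃ s ∈ S, ttrho n m u s = d}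

/-- The vertex set of a connected component `H` of the subgraph of the toroidal grid
induced by `S`. -/
def tCompVerts (n : ℕ) (m : Fin n → ℕ) (S : Set (Π i, ZMod (m i)))
    (H : ((torusGraph n m).induce S).ConnectedComponent) : Set (Π i, ZMod (m i)) :=
  {v | ∃ h : v ∈ S, ((torusGraph n m).induce S).connectedComponentMk ⟨v, h⟩ = H}

/-- `S` is a `t`-perfect truncated-metric code in the toroidal grid. -/
def IsTorusPTMC (n : ℕ) (m : Fin n → ℕ) (t : ℕ) (S : Set (Π i, ZMod (m i))) : Prop :=
  (∀ u : Π i, ZMod (m i), ∃! s, s ∈ S ∧ ttrho n m u s = ttrhoSet n m u S) ∧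
  (∀ u : Π i, ZMod (m i), ∃! H : ((torusGraph n m).induce S).ConnectedComponent,
    ttrhoSet n m u (tCompVerts n m S H) ≤ t)

/-- The translate by `w` of the binary cube in `ℤ^n` supported on the coordinate set
`A`: coordinates in `A` take values `w i` or `w i + 1`, coordinates outside `A` are
fixed. -/
def translateCube (n : ℕ) (A : Finset (Fin n)) (w : Fin n → ℤ) : Set (Fin n → ℤ) :=
  {v : Fin n → ℤ | (∀ i ∈ A, v i = w i ∨ v i = w i + 1) ∧ ∀ j ∉ A, v j = w j}

namespace St6



/-- cast to `ZMod K` -/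
def cc (K : ℕ) {N : ℕ} (x : ZMod N) : ZMod K := ZMod.cast x

lemma cc_eq (K : ℕ) {N : ℕ} (h : K ∣ N) :
    (cc K : ZMod N → ZMod K) = ⇑(ZMod.castHom h (ZMod K)) :=
  funext fun x => (ZMod.castHom_apply x).symm

lemma cc_sub {K N : ℕ} (h : K ∣ N) (x y : ZMod N) :
    cc K (x - y) = cc K x - cc K y := by rw [cc_eq K h]; exact map_sub _ _ _

lemma cc_add {K N : ℕ} (h : K ∣ N) (x y : ZMod N) :
    cc K (x + y) = cc K x + cc K y := by rw [cc_eq K h]; exact map_add _ _ _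

lemma cc_one {K N : ℕ} (h : K ∣ N) : cc K (1 : ZMod N) = 1 := by
  rw [cc_eq K h]; exact map_one _

lemma cc_zero {K N : ℕ} (h : K ∣ N) : cc K (0 : ZMod N) = 0 := by
  rw [cc_eq K h]; exact map_zero _

lemma cc_neg {K N : ℕ} (h : K ∣ N) (x : ZMod N) : cc K (-x) = - cc K x := by
  rw [cc_eq K h]; exact map_neg _ _

lemma cc_ofNat {K N : ℕ} (h : K ∣ N) (a : ℕ) : cc K ((a : ℕ) : ZMod N) = (a : ZMod K) := by
  rw [cc_eq K h]; exact map_natCast _ a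

/-- canonical small representative of a residue mod 3 -/
def rep3 {N : ℕ} (t : ZMod 3) : ZMod N := if t = 0 then 0 else if t = 1 then 1 else -1

lemma z3_cases (t : ZMod 3) : t = 0 ∨ t = 1 ∨ t = 2 := by revert t; decide

lemma cc3_rep3 {N : ℕ} (h : 3 ∣ N) (t : ZMod 3) : cc 3 (rep3 t : ZMod N) = t := by
  rcases z3_cases t with rfl | rfl | rfl
  · simp [rep3, cc_zero h]
  · simp [rep3, cc_one h]
  · have : rep3 (N := N) 2 = -1 := by
      unfold rep3; rw [if_neg (by decide), if_neg (by decide)]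
    rw [this, cc_neg h, cc_one h]; decide

lemma rep3_small {N : ℕ} (t : ZMod 3) :
    (rep3 t : ZMod N) = 0 ∨ (rep3 t : ZMod N) = 1 ∨ (rep3 t : ZMod N) = -1 := by
  unfold rep3; split_ifs <;> simp

lemma rep3_zero {N : ℕ} : (rep3 0 : ZMod N) = 0 := by unfold rep3; rw [if_pos rfl]
lemma rep3_one {N : ℕ} : (rep3 1 : ZMod N) = 1 := by
  unfold rep3; rw [if_neg (by decide), if_pos rfl]
lemma rep3_two {N : ℕ} : (rep3 2 : ZMod N) = -1 := by
  unfold rep3; rw [if_neg (by decide), if_neg (by decide)]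

lemma eq_rep3_of_small {N : ℕ} (h : 3 ∣ N) {x : ZMod N}
    (hx : x = 0 ∨ x = 1 ∨ x = -1) : x = rep3 (cc 3 x) := by
  rcases hx with rfl | rfl | rfl
  · rw [cc_zero h]; simp [rep3]
  · rw [cc_one h]; simp [rep3]
  · rw [cc_neg h, cc_one h]
    have : (-1 : ZMod 3) = 2 := by decide
    rw [this]; unfold rep3; rw [if_neg (by decide), if_neg (by decide)]

lemma small_inj {N : ℕ} (h : 3 ∣ N) {x y : ZMod N}
    (hx : x = 0 ∨ x = 1 ∨ x = -1) (hy : y = 0 ∨ y = 1 ∨ y = -1)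
    (he : cc 3 x = cc 3 y) : x = y := by
  rw [eq_rep3_of_small h hx, eq_rep3_of_small h hy, he]

/-- embedding of `ZMod 2` into `ZMod 3` as `{0,1}` -/
def emb (p : ZMod 2) : ZMod 3 := if p = 0 then 0 else 1

lemma z2_cases (p : ZMod 2) : p = 0 ∨ p = 1 := by revert p; decide



section TT
variable {n : ℕ} {m : Fin n → ℕ}

lemma ttrho_le_of {u v : Π i, ZMod (m i)} {t : ℕ}
    (hsm : ∀ i, u i = v i ∨ u i - v i = 1 ∨ u i - v i = -1)
    (hc : (Finset.univ.filter fun i => u i ≠ v i).card ≤ t) : ttrho n m u v ≤ t := by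
  rw [ttrho, if_pos hsm]; exact hc

lemma ttrho_char {u v : Π i, ZMod (m i)} {t : ℕ} (ht : t ≤ n)
    (h : ttrho n m u v ≤ t) :
    (∀ i, u i = v i ∨ u i - v i = 1 ∨ u i - v i = -1) ∧
      (Finset.univ.filter fun i => u i ≠ v i).card ≤ t := by
  rw [ttrho] at h
  split_ifs at h with hs
  · exact ⟨hs, h⟩
  · omega

lemma ttrho_self (u : Π i, ZMod (m i)) : ttrho n m u u = 0 := by
  rw [ttrho, if_pos (fun i => Or.inl rfl)]
  simp

lemma eq_of_ttrho_eq_zero {u v : Π i, ZMod (m i)} (h : ttrho n m u v = 0) : u = v := by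
  rw [ttrho] at h
  split_ifs at h with hs
  · funext i
    by_contra hne
    have : i ∈ Finset.univ.filter fun i => u i ≠ v i := by simp [hne]
    rw [Finset.card_eq_zero] at h
    simp [h] at this

lemma tts_le {u s : Π i, ZMod (m i)} {T : Set (Π i, ZMod (m i))} (hs : s ∈ T) :
    ttrhoSet n m u T ≤ ttrho n m u s := Nat.sInf_le ⟨s, hs, rfl⟩

lemma tts_exists {u : Π i, ZMod (m i)} {T : Set (Π i, ZMod (m i))} (hT : T.Nonempty) :
    ∃ s ∈ T, ttrho n m u s = ttrhoSet n m u T := by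
  obtain ⟨s0, hs0⟩ := hT
  have : {d | ∃ s ∈ T, ttrho n m u s = d}.Nonempty := ⟨ttrho n m u s0, s0, hs0, rfl⟩
  exact Nat.sInf_mem this

lemma tts_singleton (u p : Π i, ZMod (m i)) : ttrhoSet n m u {p} = ttrho n m u p := by
  refine le_antisymm (tts_le rfl) ?_
  obtain ⟨s, hs, he⟩ := tts_exists (u := u) (T := {p}) ⟨p, rfl⟩
  rw [Set.mem_singleton_iff] at hs
  rw [hs] at he
  exact he.le

end TT

section Main

variable (n : ℕ) (m : Fin n → ℕ)

def AA : Finset (Fin n) := Finset.univ.filter fun i => (i : ℕ) < n - 1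

def PtSet : Set (Π i, ZMod (m i)) := {u | ∀ i, cc 3 (u i) = 0}

def sg (w : Π i, ZMod (m i)) : ZMod 2 := ∑ i ∈ AA n, (1 + cc 2 (w i))

def Anch : Set (Π i, ZMod (m i)) :=
  {w | (∀ i : Fin n, (i : ℕ) < n - 1 → cc 3 (w i) = 1) ∧
    ∀ i : Fin n, ¬((i : ℕ) < n - 1) → cc 3 (w i) = 1 + emb (sg n m w)}

def Cube (w : Π i, ZMod (m i)) : Set (Π i, ZMod (m i)) :=
  {v | (∀ i : Fin n, (i : ℕ) < n - 1 → v i = w i ∨ v i = w i + 1) ∧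
    ∀ i : Fin n, ¬((i : ℕ) < n - 1) → v i = w i}

def SS : Set (Π i, ZMod (m i)) := PtSet n m ∪ {v | ∃ w ∈ Anch n m, v ∈ Cube n m w}

end Main

section Lemmas

variable {n : ℕ} {m : Fin n → ℕ}

lemma mem_AA {i : Fin n} : i ∈ AA n ↔ (i : ℕ) < n - 1 := by
  simp [AA]

def lastI (hn : 3 ≤ n) : Fin n := ⟨n - 1, by omega⟩

lemma notA_eq (hn : 3 ≤ n) :
    (Finset.univ.filter fun i : Fin n => ¬((i : ℕ) < n - 1)) = {lastI hn} := by
  ext i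
  simp only [Finset.mem_filter, Finset.mem_univ, true_and, Finset.mem_singleton, lastI,
    Fin.ext_iff]
  have := i.isLt
  omega

lemma AA_card (hn : 3 ≤ n) : (AA n).card = n - 1 := by
  have h := Finset.card_filter_add_card_filter_not
    (s := (Finset.univ : Finset (Fin n))) (p := fun i : Fin n => (i : ℕ) < n - 1)
  rw [notA_eq hn] at h
  simp only [Finset.card_singleton, Finset.card_univ, Fintype.card_fin] at h
  rw [AA]
  omega

lemma cube_self (w : Π i, ZMod (m i)) : w ∈ Cube n m w :=
  ⟨fun i _ => Or.inl rfl, fun i _ => rfl⟩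

lemma vertex_c3 (h3 : ∀ i, 3 ∣ m i) {w v : Π i, ZMod (m i)} (hw : w ∈ Anch n m)
    (hv : v ∈ Cube n m w) (i : Fin n) (hi : (i : ℕ) < n - 1) :
    cc 3 (v i) = 1 ∨ cc 3 (v i) = 2 := by
  rcases hv.1 i hi with h | h
  · rw [h]; exact Or.inl (hw.1 i hi)
  · rw [h, cc_add (h3 i), hw.1 i hi, cc_one (h3 i)]
    right; decide

lemma vertex_rec (h3 : ∀ i, 3 ∣ m i) {w v : Π i, ZMod (m i)} (hw : w ∈ Anch n m)
    (hv : v ∈ Cube n m w) (i : Fin n) (hi : (i : ℕ) < n - 1) :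
    w i = v i - rep3 (cc 3 (v i) - 1) := by
  rcases hv.1 i hi with h | h
  · rw [h, hw.1 i hi]
    norm_num [rep3]
  · rw [h, cc_add (h3 i), hw.1 i hi, cc_one (h3 i)]
    have h21 : (1 + 1 - 1 : ZMod 3) = 1 := by decide
    rw [h21]
    simp [rep3]

lemma anch_eq_of (h3 : ∀ i, 3 ∣ m i) {w w' v : Π i, ZMod (m i)} (hw : w ∈ Anch n m)
    (hw' : w' ∈ Anch n m) (hv : v ∈ Cube n m w) (hv' : v ∈ Cube n m w') : w = w' := by
  funext i
  by_cases hi : (i : ℕ) < n - 1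
  · rw [vertex_rec h3 hw hv i hi, vertex_rec h3 hw' hv' i hi]
  · rw [← hv.2 i hi, ← hv'.2 i hi]

lemma pt_not_cube (hn : 3 ≤ n) (h3 : ∀ i, 3 ∣ m i) {p w : Π i, ZMod (m i)}
    (hp : p ∈ PtSet n m) (hw : w ∈ Anch n m) : p ∉ Cube n m w := by
  intro hc
  have h0 : ((⟨0, by omega⟩ : Fin n) : ℕ) < n - 1 := by simp; omega
  have := vertex_c3 h3 hw hc ⟨0, by omega⟩ h0
  rw [hp ⟨0, by omega⟩] at this
  rcases this with h | h <;> exact absurd h (by decide)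

end Lemmas

section Cov

variable (n : ℕ) (m : Fin n → ℕ)

def CovP (u p : Π i, ZMod (m i)) : Prop := p ∈ PtSet n m ∧ ttrho n m u p ≤ n - 2

def CovC (u w : Π i, ZMod (m i)) : Prop :=
  w ∈ Anch n m ∧ ∃ v ∈ Cube n m w, ttrho n m u v ≤ 1

def Zf (u : Π i, ZMod (m i)) : ℕ := (Finset.univ.filter fun i => cc 3 (u i) = 0).card

end Cov

section CovLemmas

variable {n : ℕ} {m : Fin n → ℕ}

lemma one_diff {u v : Π i, ZMod (m i)}
    (h : (Finset.univ.filter fun i => u i ≠ v i).card ≤ 1) :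
    ∀ a b, u a ≠ v a → u b ≠ v b → a = b := by
  intro a b ha hb
  by_contra hne
  have hsub : ({a, b} : Finset (Fin n)) ⊆ Finset.univ.filter fun i => u i ≠ v i := by
    intro x hx
    simp only [Finset.mem_insert, Finset.mem_singleton] at hx
    rcases hx with rfl | rfl <;> simp [ha, hb]
  have := Finset.card_le_card hsub
  rw [Finset.card_insert_of_notMem (by simp [hne]), Finset.card_singleton] at this
  omega

lemma small_sub {N : ℕ} {x y : ZMod N} (h : x = y ∨ x - y = 1 ∨ x - y = -1) :
    x - y = 0 ∨ x - y = 1 ∨ x - y = -1 := by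
  rcases h with h | h | h
  · left; rw [h, sub_self]
  · right; left; exact h
  · right; right; exact h

lemma covc_coordA (h3 : ∀ i, 3 ∣ m i) {u w v : Π i, ZMod (m i)} (hw : w ∈ Anch n m)
    (hv : v ∈ Cube n m w) {i : Fin n} (hi : (i : ℕ) < n - 1)
    (hs : u i - v i = 0 ∨ u i - v i = 1 ∨ u i - v i = -1)
    (hz : cc 3 (u i) ≠ 0) : w i = u i - rep3 (cc 3 (u i) - 1) := by
  have hww : cc 3 (w i) = 1 := hw.1 i hi
  have h2 : (2 : ZMod (m i)) = 1 + 1 := by norm_num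
  rcases hv.1 i hi with hc | hc <;> rcases hs with hd | hd | hd
  · -- v = w, u - v = 0  : e = 0
    have hU : u i = w i + 0 := by rw [← hc]; linear_combination hd
    have hcu : cc 3 (u i) = 1 := by
      rw [hU, cc_add (h3 i), hww, cc_zero (h3 i), add_zero]
    rw [hcu]
    have : (1 - 1 : ZMod 3) = 0 := by decide
    rw [this]
    rw [rep3_zero]
    linear_combination -hU
  · -- v = w, u - v = 1 : e = 1
    have hU : u i = w i + 1 := by rw [← hc]; linear_combination hd
    have hcu : cc 3 (u i) = 2 := by
      rw [hU, cc_add (h3 i), hww, cc_one (h3 i)]; decide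
    rw [hcu]
    have : (2 - 1 : ZMod 3) = 1 := by decide
    rw [this]
    rw [rep3_one]
    linear_combination -hU
  · -- v = w, u - v = -1 : e = -1, cc3 u = 0, contradiction
    exfalso
    have hU : u i = w i + (-1) := by rw [← hc]; linear_combination hd
    have hcu : cc 3 (u i) = 0 := by
      rw [hU, cc_add (h3 i), hww, cc_neg (h3 i), cc_one (h3 i)]; decide
    exact hz hcu
  · -- v = w + 1, u - v = 0 : e = 1
    have hU : u i = w i + 1 := by rw [hc] at hd; linear_combination hd
    have hcu : cc 3 (u i) = 2 := by
      rw [hU, cc_add (h3 i), hww, cc_one (h3 i)]; decide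
    rw [hcu]
    have : (2 - 1 : ZMod 3) = 1 := by decide
    rw [this]
    rw [rep3_one]
    linear_combination -hU
  · -- v = w + 1, u - v = 1 : e = 2, cc3 u = 0 contradiction
    exfalso
    have hU : u i = w i + 2 := by rw [hc] at hd; linear_combination hd
    have hcu : cc 3 (u i) = 0 := by
      rw [hU, cc_add (h3 i), hww, h2, cc_add (h3 i), cc_one (h3 i)]; decide
    exact hz hcu
  · -- v = w + 1, u - v = -1 : e = 0
    have hU : u i = w i + 0 := by rw [hc] at hd; linear_combination hd
    have hcu : cc 3 (u i) = 1 := by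
      rw [hU, cc_add (h3 i), hww, cc_zero (h3 i), add_zero]
    rw [hcu]
    have : (1 - 1 : ZMod 3) = 0 := by decide
    rw [this]
    rw [rep3_zero]
    linear_combination -hU

lemma covc_coordZ (h3 : ∀ i, 3 ∣ m i) {u w v : Π i, ZMod (m i)} (hw : w ∈ Anch n m)
    (hv : v ∈ Cube n m w) {i : Fin n} (hi : (i : ℕ) < n - 1)
    (hs : u i - v i = 0 ∨ u i - v i = 1 ∨ u i - v i = -1)
    (hz : cc 3 (u i) = 0) : w i = u i + 1 ∨ w i = u i - 2 := by
  have hww : cc 3 (w i) = 1 := hw.1 i hi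
  have h2 : (2 : ZMod (m i)) = 1 + 1 := by norm_num
  rcases hv.1 i hi with hc | hc <;> rcases hs with hd | hd | hd
  · exfalso
    have hU : u i = w i + 0 := by rw [← hc]; linear_combination hd
    have hcu : cc 3 (u i) = 1 := by
      rw [hU, cc_add (h3 i), hww, cc_zero (h3 i), add_zero]
    rw [hz] at hcu; exact absurd hcu (by decide)
  · exfalso
    have hU : u i = w i + 1 := by rw [← hc]; linear_combination hd
    have hcu : cc 3 (u i) = 2 := by
      rw [hU, cc_add (h3 i), hww, cc_one (h3 i)]; decide
    rw [hz] at hcu; exact absurd hcu (by decide)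
  · -- e = -1 : w = u + 1
    have hU : u i = w i + (-1) := by rw [← hc]; linear_combination hd
    left; linear_combination -hU
  · exfalso
    have hU : u i = w i + 1 := by rw [hc] at hd; linear_combination hd
    have hcu : cc 3 (u i) = 2 := by
      rw [hU, cc_add (h3 i), hww, cc_one (h3 i)]; decide
    rw [hz] at hcu; exact absurd hcu (by decide)
  · -- e = 2 : w = u - 2
    have hU : u i = w i + 2 := by rw [hc] at hd; linear_combination hd
    right; linear_combination -hU
  · exfalso
    have hU : u i = w i + 0 := by rw [hc] at hd; linear_combination hd
    have hcu : cc 3 (u i) = 1 := by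
      rw [hU, cc_add (h3 i), hww, cc_zero (h3 i), add_zero]
    rw [hz] at hcu; exact absurd hcu (by decide)

end CovLemmas

section Unique

variable {n : ℕ} {m : Fin n → ℕ}

lemma covc_unique (hn : 3 ≤ n) (h3 : ∀ i, 3 ∣ m i)
    (h6 : ∀ i : Fin n, (i : ℕ) < n - 1 → 6 ∣ m i)
    {u w w' : Π i, ZMod (m i)} (h : CovC n m u w) (h' : CovC n m u w') : w = w' := by
  obtain ⟨hw, v, hv, hd⟩ := h
  obtain ⟨hw', v', hv', hd'⟩ := h'
  obtain ⟨hsm, hcard⟩ := ttrho_char (by omega) hd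
  obtain ⟨hsm', hcard'⟩ := ttrho_char (by omega) hd'
  have hone := one_diff hcard
  have hone' := one_diff hcard'
  have hs : ∀ i, u i - v i = 0 ∨ u i - v i = 1 ∨ u i - v i = -1 :=
    fun i => small_sub (hsm i)
  have hs' : ∀ i, u i - v' i = 0 ∨ u i - v' i = 1 ∨ u i - v' i = -1 :=
    fun i => small_sub (hsm' i)
  by_cases hA : ∀ i : Fin n, (i : ℕ) < n - 1 → cc 3 (u i) ≠ 0
  · have hAg : ∀ i : Fin n, (i : ℕ) < n - 1 → w i = w' i := by
      intro i hi
      rw [covc_coordA h3 hw hv hi (hs i) (hA i hi),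
        covc_coordA h3 hw' hv' hi (hs' i) (hA i hi)]
    have hσ : sg n m w = sg n m w' :=
      Finset.sum_congr rfl fun i hiA => by rw [hAg i (mem_AA.mp hiA)]
    funext i
    by_cases hi : (i : ℕ) < n - 1
    · exact hAg i hi
    · have e1 : u i - w i = u i - v i := by rw [hv.2 i hi]
      have e1' : u i - w' i = u i - v' i := by rw [hv'.2 i hi]
      have hsmall : u i - w i = 0 ∨ u i - w i = 1 ∨ u i - w i = -1 := by
        rw [e1]; exact hs i
      have hsmall' : u i - w' i = 0 ∨ u i - w' i = 1 ∨ u i - w' i = -1 := by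
        rw [e1']; exact hs' i
      have hc : cc 3 (u i - w i) = cc 3 (u i - w' i) := by
        rw [cc_sub (h3 i), cc_sub (h3 i), hw.2 i hi, hw'.2 i hi, hσ]
      exact sub_right_inj.mp (small_inj (h3 i) hsmall hsmall' hc)
  · push_neg at hA
    obtain ⟨i₀, hi₀, hz⟩ := hA
    have hvne : u i₀ ≠ v i₀ := by
      intro hEq
      rcases vertex_c3 h3 hw hv i₀ hi₀ with hcv | hcv <;> rw [← hEq, hz] at hcv <;>
        exact absurd hcv (by decide)
    have hvne' : u i₀ ≠ v' i₀ := by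
      intro hEq
      rcases vertex_c3 h3 hw' hv' i₀ hi₀ with hcv | hcv <;> rw [← hEq, hz] at hcv <;>
        exact absurd hcv (by decide)
    have huv : ∀ j, j ≠ i₀ → u j = v j := by
      intro j hj; by_contra hne; exact hj (hone j i₀ hne hvne)
    have huv' : ∀ j, j ≠ i₀ → u j = v' j := by
      intro j hj; by_contra hne; exact hj (hone' j i₀ hne hvne')
    have hAg : ∀ j : Fin n, j ≠ i₀ → (j : ℕ) < n - 1 → w j = w' j := by
      intro j hj hjlt
      rw [vertex_rec h3 hw hv j hjlt, vertex_rec h3 hw' hv' j hjlt, ← huv j hj, ← huv' j hj]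
    have hlast : ∀ j : Fin n, ¬((j : ℕ) < n - 1) → w j = u j ∧ w' j = u j := by
      intro j hj
      have hji : j ≠ i₀ := by
        intro hEq; rw [hEq] at hj; exact hj hi₀
      exact ⟨((huv j hji).trans (hv.2 j hj)).symm, ((huv' j hji).trans (hv'.2 j hj)).symm⟩
    have hD : w i₀ = u i₀ + 1 ∨ w i₀ = u i₀ - 2 := covc_coordZ h3 hw hv hi₀ (hs i₀) hz
    have hD' : w' i₀ = u i₀ + 1 ∨ w' i₀ = u i₀ - 2 := covc_coordZ h3 hw' hv' hi₀ (hs' i₀) hz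
    have hL : ¬((lastI hn : Fin n) : ℕ) < n - 1 := by simp [lastI]
    have mixed : ∀ a b : Π i, ZMod (m i), a ∈ Anch n m → b ∈ Anch n m →
        (∀ j : Fin n, j ≠ i₀ → (j : ℕ) < n - 1 → a j = b j) →
        (∀ j : Fin n, ¬((j : ℕ) < n - 1) → a j = u j ∧ b j = u j) →
        a i₀ = u i₀ + 1 → b i₀ = u i₀ - 2 → False := by
      intro a b ha hb hag hlst ha0 hb0
      have h2i : 2 ∣ m i₀ := dvd_trans (by norm_num) (h6 i₀ hi₀)
      have hab : a i₀ = b i₀ + 3 := by rw [ha0, hb0]; ring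
      have hc2 : cc 2 (a i₀) = cc 2 (b i₀) + 1 := by
        rw [hab, cc_add h2i]
        congr 1
        have h3c : (3 : ZMod (m i₀)) = ((3 : ℕ) : ZMod (m i₀)) := by norm_num
        rw [h3c, cc_ofNat h2i]; decide
      have hiA : i₀ ∈ AA n := mem_AA.mpr hi₀
      have e1 : sg n m a = (1 + cc 2 (a i₀)) + ∑ j ∈ (AA n).erase i₀, (1 + cc 2 (a j)) :=
        (Finset.add_sum_erase _ _ hiA).symm
      have e2 : sg n m b = (1 + cc 2 (b i₀)) + ∑ j ∈ (AA n).erase i₀, (1 + cc 2 (b j)) :=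
        (Finset.add_sum_erase _ _ hiA).symm
      have e3 : ∑ j ∈ (AA n).erase i₀, (1 + cc 2 (a j)) =
          ∑ j ∈ (AA n).erase i₀, (1 + cc 2 (b j)) := by
        refine Finset.sum_congr rfl fun j hj => ?_
        have hjne := Finset.ne_of_mem_erase hj
        have hjA := Finset.mem_of_mem_erase hj
        rw [hag j hjne (mem_AA.mp hjA)]
      have hsg : sg n m a = sg n m b + 1 := by rw [e1, e2, e3, hc2]; ring
      have h1 : cc 3 (a (lastI hn)) = 1 + emb (sg n m a) := ha.2 _ hL
      have h2 : cc 3 (b (lastI hn)) = 1 + emb (sg n m b) := hb.2 _ hL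
      have heq : a (lastI hn) = b (lastI hn) := by
        rw [(hlst _ hL).1, (hlst _ hL).2]
      rw [heq, h2, hsg] at h1
      revert h1
      have : ∀ p : ZMod 2, ¬((1 : ZMod 3) + emb p = 1 + emb (p + 1)) := by decide
      exact this _
    have hii : w i₀ = w' i₀ := by
      rcases hD with h1 | h1 <;> rcases hD' with h2 | h2
      · rw [h1, h2]
      · exact absurd (mixed w w' hw hw' hAg hlast h1 h2) not_false
      · exact absurd (mixed w' w hw' hw (fun j a b => (hAg j a b).symm)
          (fun j hj => ⟨(hlast j hj).2, (hlast j hj).1⟩) h2 h1) not_false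
      · rw [h1, h2]
    funext i
    by_cases hi : (i : ℕ) < n - 1
    · by_cases hi0 : i = i₀
      · rw [hi0]; exact hii
      · exact hAg i hi0 hi
    · rw [(hlast i hi).1, (hlast i hi).2]

end Unique

section Exist

variable {n : ℕ} {m : Fin n → ℕ}

lemma cond_of_sub {N : ℕ} {x y : ZMod N} (h : x - y = 0 ∨ x - y = 1 ∨ x - y = -1) :
    x = y ∨ x - y = 1 ∨ x - y = -1 := by
  rcases h with h | h | h
  · exact Or.inl (sub_eq_zero.mp h)
  · exact Or.inr (Or.inl h)
  · exact Or.inr (Or.inr h)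

lemma eq_lastI (hn : 3 ≤ n) (i : Fin n) (hi : ¬((i : ℕ) < n - 1)) : i = lastI hn := by
  have := i.isLt
  exact Fin.ext (by simp [lastI]; omega)

lemma cc2_two {N : ℕ} (h2 : 2 ∣ N) : cc 2 (2 : ZMod N) = 0 := by
  have : (2 : ZMod N) = 1 + 1 := by norm_num
  rw [this, cc_add h2, cc_one h2]; decide

lemma cc3_two {N : ℕ} (h3 : 3 ∣ N) : cc 3 (2 : ZMod N) = 2 := by
  have : (2 : ZMod N) = 1 + 1 := by norm_num
  rw [this, cc_add h3, cc_one h3]; decide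

lemma covp_exu (hn : 3 ≤ n) (h3 : ∀ i, 3 ∣ m i) {u : Π i, ZMod (m i)}
    (hZ : 2 ≤ Zf n m u) : ∃! p, CovP n m u p := by
  classical
  set p : Π i, ZMod (m i) := fun i => u i - rep3 (cc 3 (u i)) with hp
  have hsub : ∀ i, u i - p i = rep3 (cc 3 (u i)) := fun i => by rw [hp]; ring
  have hpPt : p ∈ PtSet n m := by
    intro i
    rw [hp]
    show cc 3 (u i - rep3 (cc 3 (u i))) = 0
    rw [cc_sub (h3 i), cc3_rep3 (h3 i), sub_self]
  have hsm : ∀ i, u i = p i ∨ u i - p i = 1 ∨ u i - p i = -1 := by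
    intro i
    apply cond_of_sub
    rw [hsub i]
    exact rep3_small _
  have hfsub : (Finset.univ.filter fun i => u i ≠ p i) ⊆
      Finset.univ.filter fun i => ¬(cc 3 (u i) = 0) := by
    intro i hi
    simp only [Finset.mem_filter, Finset.mem_univ, true_and] at hi ⊢
    intro h0
    apply hi
    have : u i - p i = 0 := by rw [hsub i, h0, rep3_zero]
    exact (sub_eq_zero.mp this)
  have hcards := Finset.card_filter_add_card_filter_not
    (s := (Finset.univ : Finset (Fin n))) (p := fun i => cc 3 (u i) = 0)
  simp only [Finset.card_univ, Fintype.card_fin] at hcards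
  have hcard : (Finset.univ.filter fun i => u i ≠ p i).card ≤ n - 2 := by
    have h1 := Finset.card_le_card hfsub
    have h2 : (Finset.univ.filter fun i => cc 3 (u i) = 0).card = Zf n m u := rfl
    omega
  refine ⟨p, ⟨hpPt, ttrho_le_of hsm hcard⟩, ?_⟩
  rintro q ⟨hqPt, hq⟩
  obtain ⟨hsmq, -⟩ := ttrho_char (by omega) hq
  funext i
  have hcq : cc 3 (u i - q i) = cc 3 (u i) := by
    rw [cc_sub (h3 i), hqPt i, sub_zero]
  have hcp : cc 3 (u i - p i) = cc 3 (u i) := by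
    rw [cc_sub (h3 i), hpPt i, sub_zero]
  have hps : u i - p i = 0 ∨ u i - p i = 1 ∨ u i - p i = -1 := by
    rw [hsub i]; exact rep3_small _
  have hqp : u i - q i = u i - p i :=
    small_inj (h3 i) (small_sub (hsmq i)) hps (by rw [hcq, hcp])
  exact sub_right_inj.mp hqp

lemma covp_not (hn : 3 ≤ n) (h3 : ∀ i, 3 ∣ m i) {u : Π i, ZMod (m i)}
    (hZ : Zf n m u ≤ 1) (p : Π i, ZMod (m i)) : ¬ CovP n m u p := by
  rintro ⟨hpPt, hle⟩
  obtain ⟨hsm, hcard⟩ := ttrho_char (by omega) hle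
  have hfsub : (Finset.univ.filter fun i => ¬(cc 3 (u i) = 0)) ⊆
      Finset.univ.filter fun i => u i ≠ p i := by
    intro i hi
    simp only [Finset.mem_filter, Finset.mem_univ, true_and] at hi ⊢
    intro heq
    exact hi (by rw [heq]; exact hpPt i)
  have h1 := Finset.card_le_card hfsub
  have hcards := Finset.card_filter_add_card_filter_not
    (s := (Finset.univ : Finset (Fin n))) (p := fun i => cc 3 (u i) = 0)
  simp only [Finset.card_univ, Fintype.card_fin] at hcards
  have h2 : (Finset.univ.filter fun i => cc 3 (u i) = 0).card = Zf n m u := rfl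
  omega

lemma covc_not (hn : 3 ≤ n) (h3 : ∀ i, 3 ∣ m i) {u : Π i, ZMod (m i)}
    (hZ : 2 ≤ Zf n m u) (w : Π i, ZMod (m i)) : ¬ CovC n m u w := by
  rintro ⟨hw, v, hv, hle⟩
  obtain ⟨hsm, hcard⟩ := ttrho_char (by omega) hle
  have hone := one_diff hcard
  have hZne : ∀ i : Fin n, cc 3 (u i) = 0 → (i : ℕ) < n - 1 → u i ≠ v i := by
    intro i h0 hi heq
    rcases vertex_c3 h3 hw hv i hi with hcv | hcv <;> rw [← heq, h0] at hcv <;>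
      exact absurd hcv (by decide)
  have hzc : (Finset.univ.filter fun i => cc 3 (u i) = 0).card = Zf n m u := rfl
  obtain ⟨i, hi, j, hj, hij⟩ := Finset.one_lt_card.mp
    (by rw [hzc]; omega : 1 < (Finset.univ.filter fun i => cc 3 (u i) = 0).card)
  simp only [Finset.mem_filter, Finset.mem_univ, true_and] at hi hj
  by_cases hiA : (i : ℕ) < n - 1 <;> by_cases hjA : (j : ℕ) < n - 1
  · exact hij (hone i j (hZne i hi hiA) (hZne j hj hjA))
  · -- j is the last coordinate; diff forced at i, so u j = v j = w j
    have hne := hZne i hi hiA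
    have huj : u j = v j := by
      by_contra hcon
      exact hij (hone i j hne hcon)
    have : cc 3 (u j) = 1 + emb (sg n m w) := by
      rw [huj, hv.2 j hjA]; exact hw.2 j hjA
    rw [hj] at this
    revert this
    have : ∀ p : ZMod 2, ¬((0 : ZMod 3) = 1 + emb p) := by decide
    exact this _
  · have hne := hZne j hj hjA
    have hui : u i = v i := by
      by_contra hcon
      exact hij ((hone j i hne hcon).symm)
    have : cc 3 (u i) = 1 + emb (sg n m w) := by
      rw [hui, hv.2 i hiA]; exact hw.2 i hiA
    rw [hi] at this
    revert this
    have : ∀ p : ZMod 2, ¬((0 : ZMod 3) = 1 + emb p) := by decide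
    exact this _
  · have hi' := i.isLt
    have hj' := j.isLt
    exact hij (Fin.ext (by omega))

end Exist

section ExistCube

variable {n : ℕ} {m : Fin n → ℕ}

lemma covc_ex (hn : 3 ≤ n) (h3 : ∀ i, 3 ∣ m i)
    (h6 : ∀ i : Fin n, (i : ℕ) < n - 1 → 6 ∣ m i) {u : Π i, ZMod (m i)}
    (hZ : Zf n m u ≤ 1) : ∃ w, CovC n m u w := by
  classical
  by_cases hA : ∀ i : Fin n, (i : ℕ) < n - 1 → cc 3 (u i) ≠ 0
  · -- no zero residues among the first n-1 coordinates
    set σ0 : ZMod 2 := ∑ i ∈ AA n, (1 + cc 2 (u i - rep3 (cc 3 (u i) - 1))) with hσ0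
    set w : Π i, ZMod (m i) := fun i =>
      if (i : ℕ) < n - 1 then u i - rep3 (cc 3 (u i) - 1)
      else u i - rep3 (cc 3 (u i) - (1 + emb σ0)) with hwdef
    have hwA : ∀ i : Fin n, (i : ℕ) < n - 1 → w i = u i - rep3 (cc 3 (u i) - 1) :=
      fun i hi => by rw [hwdef]; exact if_pos hi
    have hwL : ∀ i : Fin n, ¬((i : ℕ) < n - 1) →
        w i = u i - rep3 (cc 3 (u i) - (1 + emb σ0)) :=
      fun i hi => by rw [hwdef]; exact if_neg hi
    have hσ : sg n m w = σ0 := by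
      rw [hσ0, sg]
      exact Finset.sum_congr rfl fun i hi => by rw [hwA i (mem_AA.mp hi)]
    have hwAnch : w ∈ Anch n m := by
      constructor
      · intro i hi
        rw [hwA i hi, cc_sub (h3 i), cc3_rep3 (h3 i), sub_sub_cancel]
      · intro i hi
        rw [hwL i hi, cc_sub (h3 i), cc3_rep3 (h3 i), sub_sub_cancel, hσ]
    set v : Π i, ZMod (m i) := fun i => if (i : ℕ) < n - 1 then u i else w i with hvdef
    have hvC : v ∈ Cube n m w := by
      constructor
      · intro i hi
        have hv : v i = u i := by rw [hvdef]; exact if_pos hi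
        rcases z3_cases (cc 3 (u i)) with h0 | h1 | h2
        · exact absurd h0 (hA i hi)
        · left
          rw [hv, hwA i hi, h1]
          have h11 : (1 - 1 : ZMod 3) = 0 := by decide
          rw [h11, rep3_zero, sub_zero]
        · right
          rw [hv, hwA i hi, h2]
          have h21 : (2 - 1 : ZMod 3) = 1 := by decide
          rw [h21, rep3_one]
          ring
      · intro i hi
        rw [hvdef]; exact if_neg hi
    refine ⟨w, hwAnch, v, hvC, ttrho_le_of ?_ ?_⟩
    · intro i
      by_cases hi : (i : ℕ) < n - 1
      · left; rw [hvdef]; exact (if_pos hi).symm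
      · apply cond_of_sub
        have hv : v i = w i := by rw [hvdef]; exact if_neg hi
        rw [hv, hwL i hi, sub_sub_cancel]
        exact rep3_small _
    · have hsub : (Finset.univ.filter fun i => u i ≠ v i) ⊆ {lastI hn} := by
        intro i hi
        simp only [Finset.mem_filter, Finset.mem_univ, true_and] at hi
        rw [Finset.mem_singleton]
        refine eq_lastI hn i fun hlt => hi ?_
        rw [hvdef]; exact (if_pos hlt).symm
      calc (Finset.univ.filter fun i => u i ≠ v i).card ≤ ({lastI hn} : Finset (Fin n)).card :=
            Finset.card_le_card hsub
        _ = 1 := Finset.card_singleton _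
  · push_neg at hA
    obtain ⟨i₀, hi₀, hz0⟩ := hA
    have hZother : ∀ j : Fin n, j ≠ i₀ → cc 3 (u j) ≠ 0 := by
      intro j hj hzj
      have hsub : ({j, i₀} : Finset (Fin n)) ⊆ Finset.univ.filter fun i => cc 3 (u i) = 0 := by
        intro x hx
        simp only [Finset.mem_insert, Finset.mem_singleton] at hx
        rcases hx with rfl | rfl <;> simp [hzj, hz0]
      have h1 := Finset.card_le_card hsub
      rw [Finset.card_insert_of_notMem (by simp [hj]), Finset.card_singleton] at h1
      have h2 : (Finset.univ.filter fun i => cc 3 (u i) = 0).card = Zf n m u := rfl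
      omega
    have hLne : (lastI hn : Fin n) ≠ i₀ := by
      intro hEq
      have h0 : ((lastI hn : Fin n) : ℕ) = n - 1 := rfl
      rw [hEq] at h0
      omega
    have hLnotA : ¬(((lastI hn : Fin n) : ℕ) < n - 1) := by simp [lastI]
    have hkey : ∀ w' : Π i, ZMod (m i), w' i₀ = u i₀ + 1 ∨ w' i₀ = u i₀ - 2 →
        (∀ j : Fin n, j ≠ i₀ → (j : ℕ) < n - 1 → w' j = u j - rep3 (cc 3 (u j) - 1)) →
        (∀ j : Fin n, ¬((j : ℕ) < n - 1) → w' j = u j) →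
        cc 3 (u (lastI hn)) = 1 + emb (sg n m w') → ∃ w, CovC n m u w := by
      intro w' hD hA' hL' hlast
      refine ⟨w', ⟨?_, ?_⟩, ?_⟩
      · intro i hi
        by_cases hii : i = i₀
        · rw [hii]
          rcases hD with hD | hD
          · rw [hD, cc_add (h3 i₀), hz0, cc_one (h3 i₀)]; decide
          · rw [hD, cc_sub (h3 i₀), hz0, cc3_two (h3 i₀)]; decide
        · rw [hA' i hii hi, cc_sub (h3 i), cc3_rep3 (h3 i), sub_sub_cancel]
      · intro i hi
        rw [hL' i hi]
        have hiL : i = lastI hn := eq_lastI hn i hi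
        rw [hiL]
        exact hlast
      · -- the vertex
        set x0 : ZMod (m i₀) := if w' i₀ = u i₀ + 1 then u i₀ + 1 else u i₀ - 1 with hx0
        set v : Π i, ZMod (m i) := Function.update u i₀ x0 with hvdef
        have hvi0 : v i₀ = x0 := by rw [hvdef]; exact Function.update_self _ _ _
        have hvne : ∀ i, i ≠ i₀ → v i = u i := by
          intro i hii; rw [hvdef]; exact Function.update_of_ne hii _ _
        have hne2 : w' i₀ = u i₀ - 2 → ¬(w' i₀ = u i₀ + 1) := by
          intro hD hEq
          rw [hD] at hEq
          have h33 : (3 : ZMod (m i₀)) = 0 := by linear_combination -hEq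
          have h6i : 6 ∣ m i₀ := h6 i₀ hi₀
          have hcast := cc_ofNat (K := 6) h6i 3
          rw [show ((3 : ℕ) : ZMod (m i₀)) = (3 : ZMod (m i₀)) by norm_num, h33,
            cc_zero h6i] at hcast
          exact absurd hcast.symm (by decide)
        refine ⟨v, ⟨?_, ?_⟩, ttrho_le_of ?_ ?_⟩
        · intro i hi
          by_cases hii : i = i₀
          · rw [hii, hvi0, hx0]
            rcases hD with hD | hD
            · left; rw [if_pos hD, hD]
            · right; rw [if_neg (hne2 hD), hD]; ring
          · have hv : v i = u i := hvne i hii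
            rcases z3_cases (cc 3 (u i)) with h0 | h1 | h2
            · exact absurd h0 (hZother i hii)
            · left
              rw [hv, hA' i hii hi, h1]
              have h11 : (1 - 1 : ZMod 3) = 0 := by decide
              rw [h11, rep3_zero, sub_zero]
            · right
              rw [hv, hA' i hii hi, h2]
              have h21 : (2 - 1 : ZMod 3) = 1 := by decide
              rw [h21, rep3_one]
              ring
        · intro i hi
          have hii : i ≠ i₀ := by
            intro hEq; rw [hEq] at hi; exact hi hi₀
          rw [hvne i hii, hL' i hi]
        · intro i
          by_cases hii : i = i₀
          · rw [hii, hvi0, hx0]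
            by_cases hcase : w' i₀ = u i₀ + 1
            · right; right; rw [if_pos hcase]; ring
            · right; left; rw [if_neg hcase]; ring
          · left; exact (hvne i hii).symm
        · have hsub : (Finset.univ.filter fun i => u i ≠ v i) ⊆ {i₀} := by
            intro i hi
            simp only [Finset.mem_filter, Finset.mem_univ, true_and] at hi
            rw [Finset.mem_singleton]
            by_contra hii
            exact hi (hvne i hii).symm
          calc (Finset.univ.filter fun i => u i ≠ v i).card ≤ ({i₀} : Finset (Fin n)).card :=
                Finset.card_le_card hsub
            _ = 1 := Finset.card_singleton _
    -- choose the branch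
    set w1 : Π i, ZMod (m i) := Function.update
      (fun i => if (i : ℕ) < n - 1 then u i - rep3 (cc 3 (u i) - 1) else u i)
      i₀ (u i₀ + 1) with hw1def
    have hw1i : w1 i₀ = u i₀ + 1 := by rw [hw1def]; exact Function.update_self _ _ _
    have hw1A : ∀ j : Fin n, j ≠ i₀ → (j : ℕ) < n - 1 →
        w1 j = u j - rep3 (cc 3 (u j) - 1) := by
      intro j hj hjlt
      rw [hw1def, Function.update_of_ne hj]
      exact if_pos hjlt
    have hw1L : ∀ j : Fin n, ¬((j : ℕ) < n - 1) → w1 j = u j := by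
      intro j hj
      have hji : j ≠ i₀ := by
        intro hEq; rw [hEq] at hj; exact hj hi₀
      rw [hw1def, Function.update_of_ne hji]
      exact if_neg hj
    by_cases hch : cc 3 (u (lastI hn)) = 1 + emb (sg n m w1)
    · exact hkey w1 (Or.inl hw1i) hw1A hw1L hch
    · set w2 : Π i, ZMod (m i) := Function.update w1 i₀ (u i₀ - 2) with hw2def
      have hw2i : w2 i₀ = u i₀ - 2 := by rw [hw2def]; exact Function.update_self _ _ _
      have hsame : ∀ j, j ≠ i₀ → w2 j = w1 j := by
        intro j hj; rw [hw2def]; exact Function.update_of_ne hj _ _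
      have hw2A : ∀ j : Fin n, j ≠ i₀ → (j : ℕ) < n - 1 →
          w2 j = u j - rep3 (cc 3 (u j) - 1) := by
        intro j hj hjlt
        rw [hsame j hj]
        exact hw1A j hj hjlt
      have hw2L : ∀ j : Fin n, ¬((j : ℕ) < n - 1) → w2 j = u j := by
        intro j hj
        have hji : j ≠ i₀ := by
          intro hEq; rw [hEq] at hj; exact hj hi₀
        rw [hsame j hji]
        exact hw1L j hj
      have h2i : 2 ∣ m i₀ := dvd_trans (by norm_num) (h6 i₀ hi₀)
      have hiA : i₀ ∈ AA n := mem_AA.mpr hi₀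
      have hc2 : cc 2 (w2 i₀) = cc 2 (w1 i₀) + 1 := by
        have hab : w2 i₀ = w1 i₀ - 3 := by rw [hw2i, hw1i]; ring
        rw [hab, cc_sub h2i]
        have h3c : (3 : ZMod (m i₀)) = ((3 : ℕ) : ZMod (m i₀)) := by norm_num
        rw [h3c, cc_ofNat h2i]
        have h31 : ((3 : ℕ) : ZMod 2) = 1 := by decide
        have hneg : (-(1 : ZMod 2)) = 1 := by decide
        rw [h31, sub_eq_add_neg, hneg]
      have e1 : sg n m w2 = (1 + cc 2 (w2 i₀)) + ∑ j ∈ (AA n).erase i₀, (1 + cc 2 (w2 j)) :=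
        (Finset.add_sum_erase _ _ hiA).symm
      have e2 : sg n m w1 = (1 + cc 2 (w1 i₀)) + ∑ j ∈ (AA n).erase i₀, (1 + cc 2 (w1 j)) :=
        (Finset.add_sum_erase _ _ hiA).symm
      have e3 : ∑ j ∈ (AA n).erase i₀, (1 + cc 2 (w2 j)) =
          ∑ j ∈ (AA n).erase i₀, (1 + cc 2 (w1 j)) :=
        Finset.sum_congr rfl fun j hj => by rw [hsame j (Finset.ne_of_mem_erase hj)]
      have hsg : sg n m w2 = sg n m w1 + 1 := by rw [e1, e2, e3, hc2]; ring
      have fact : ∀ (s' : ZMod 3) (p : ZMod 2), s' ≠ 0 → s' ≠ 1 + emb p →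
          s' = 1 + emb (p + 1) := by decide
      exact hkey w2 (Or.inr hw2i) hw2A hw2L
        (by rw [hsg]; exact fact _ _ (hZother _ hLne) hch)

end ExistCube

section Near

variable {n : ℕ} {m : Fin n → ℕ}

lemma cc6_two {N : ℕ} (h : 6 ∣ N) : cc 6 (2 : ZMod N) = 2 := by
  have h2 : (2 : ZMod N) = 1 + 1 := by norm_num
  rw [h2, cc_add h, cc_one h]; decide

lemma near_cube (hn : 3 ≤ n) (h3 : ∀ i, 3 ∣ m i)
    (h6 : ∀ i : Fin n, (i : ℕ) < n - 1 → 6 ∣ m i) {u w : Π i, ZMod (m i)}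
    (hw : w ∈ Anch n m) (hle : ttrhoSet n m u (Cube n m w) ≤ 1) :
    ∃! v, v ∈ Cube n m w ∧ ttrho n m u v = ttrhoSet n m u (Cube n m w) := by
  have hne : (Cube n m w).Nonempty := ⟨w, cube_self w⟩
  obtain ⟨v0, hv0, he0⟩ := tts_exists (u := u) hne
  refine ⟨v0, ⟨hv0, he0⟩, ?_⟩
  rintro v1 ⟨hv1, he1⟩
  set d := ttrhoSet n m u (Cube n m w) with hd
  interval_cases d
  · -- distance 0 : both equal u
    have h1 : v1 = u := (eq_of_ttrho_eq_zero he1).symm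
    have h0 : v0 = u := (eq_of_ttrho_eq_zero he0).symm
    rw [h1, h0]
  · -- distance 1
    have hnotin : u ∉ Cube n m w := by
      intro hu
      have := tts_le (u := u) hu
      rw [ttrho_self] at this
      omega
    obtain ⟨hsm1, -⟩ := ttrho_char (t := 1) (by omega) he1.le
    obtain ⟨hsm0, -⟩ := ttrho_char (t := 1) (by omega) he0.le
    have hc1 : (Finset.univ.filter fun i => u i ≠ v1 i).card = 1 := by
      rw [ttrho, if_pos hsm1] at he1; exact he1
    have hc0 : (Finset.univ.filter fun i => u i ≠ v0 i).card = 1 := by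
      rw [ttrho, if_pos hsm0] at he0; exact he0
    obtain ⟨a, ha⟩ := Finset.card_eq_one.mp hc1
    obtain ⟨b, hb⟩ := Finset.card_eq_one.mp hc0
    have hua : u a ≠ v1 a := by
      have : a ∈ Finset.univ.filter fun i => u i ≠ v1 i := by rw [ha]; simp
      simpa using this
    have hub : u b ≠ v0 b := by
      have : b ∈ Finset.univ.filter fun i => u i ≠ v0 i := by rw [hb]; simp
      simpa using this
    have heq1 : ∀ j, j ≠ a → u j = v1 j := by
      intro j hj
      by_contra hcon
      have : j ∈ Finset.univ.filter fun i => u i ≠ v1 i := by simp [hcon]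
      rw [ha, Finset.mem_singleton] at this
      exact hj this
    have heq0 : ∀ j, j ≠ b → u j = v0 j := by
      intro j hj
      by_contra hcon
      have : j ∈ Finset.univ.filter fun i => u i ≠ v0 i := by simp [hcon]
      rw [hb, Finset.mem_singleton] at this
      exact hj this
    by_cases hab : a = b
    · -- same exceptional coordinate
      subst hab
      have hcoord : v1 a = v0 a := by
        by_cases haA : (a : ℕ) < n - 1
        · rcases hv1.1 a haA with h1 | h1 <;> rcases hv0.1 a haA with h0 | h0 <;>
            (try (rw [h1, h0])) <;> exfalso
          · -- v1 a = w a, v0 a = w a + 1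
            have hd1 : u a - v1 a = 1 ∨ u a - v1 a = -1 := by
              rcases hsm1 a with h | h | h
              · exact absurd h hua
              · exact Or.inl h
              · exact Or.inr h
            have hd0 : u a - v0 a = 1 ∨ u a - v0 a = -1 := by
              rcases hsm0 a with h | h | h
              · exact absurd h hub
              · exact Or.inl h
              · exact Or.inr h
            have hdiff : v0 a - v1 a = 1 := by rw [h1, h0]; ring
            have h6a := h6 a haA
            rcases hd1 with h | h <;> rcases hd0 with h' | h'
            · have : (0 : ZMod (m a)) = 1 := by linear_combination hdiff - h + h'
              have := congrArg (cc 6) this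
              rw [cc_zero h6a, cc_one h6a] at this
              exact absurd this (by decide)
            · have : (2 : ZMod (m a)) = 1 := by linear_combination hdiff - h + h'
              have := congrArg (cc 6) this
              rw [cc6_two h6a, cc_one h6a] at this
              exact absurd this (by decide)
            · have : (-2 : ZMod (m a)) = 1 := by linear_combination hdiff - h + h'
              have := congrArg (cc 6) this
              rw [cc_neg h6a, cc6_two h6a, cc_one h6a] at this
              exact absurd this (by decide)
            · have : (0 : ZMod (m a)) = 1 := by linear_combination hdiff - h + h'
              have := congrArg (cc 6) this
              rw [cc_zero h6a, cc_one h6a] at this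
              exact absurd this (by decide)
          · -- v1 a = w a + 1, v0 a = w a : symmetric
            have hd1 : u a - v1 a = 1 ∨ u a - v1 a = -1 := by
              rcases hsm1 a with h | h | h
              · exact absurd h hua
              · exact Or.inl h
              · exact Or.inr h
            have hd0 : u a - v0 a = 1 ∨ u a - v0 a = -1 := by
              rcases hsm0 a with h | h | h
              · exact absurd h hub
              · exact Or.inl h
              · exact Or.inr h
            have hdiff : v1 a - v0 a = 1 := by rw [h1, h0]; ring
            have h6a := h6 a haA
            rcases hd1 with h | h <;> rcases hd0 with h' | h'
            · have : (0 : ZMod (m a)) = 1 := by linear_combination hdiff + h - h'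
              have := congrArg (cc 6) this
              rw [cc_zero h6a, cc_one h6a] at this
              exact absurd this (by decide)
            · have : (-2 : ZMod (m a)) = 1 := by linear_combination hdiff + h - h'
              have := congrArg (cc 6) this
              rw [cc_neg h6a, cc6_two h6a, cc_one h6a] at this
              exact absurd this (by decide)
            · have : (2 : ZMod (m a)) = 1 := by linear_combination hdiff + h - h'
              have := congrArg (cc 6) this
              rw [cc6_two h6a, cc_one h6a] at this
              exact absurd this (by decide)
            · have : (0 : ZMod (m a)) = 1 := by linear_combination hdiff + h - h'
              have := congrArg (cc 6) this
              rw [cc_zero h6a, cc_one h6a] at this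
              exact absurd this (by decide)
        · rw [hv1.2 a haA, hv0.2 a haA]
      funext j
      by_cases hj : j = a
      · rw [hj]; exact hcoord
      · rw [← heq1 j hj, heq0 j hj]
    · -- different exceptional coordinates : u would be in the cube
      exfalso
      have haA : (a : ℕ) < n - 1 := by
        by_contra haA
        have h1 : v1 a = w a := hv1.2 a haA
        have h0 : v0 a = w a := hv0.2 a haA
        have : u a = v0 a := heq0 a hab
        rw [h0, ← h1] at this
        exact hua this
      have hbA : (b : ℕ) < n - 1 := by
        by_contra hbA
        have h1 : v1 b = w b := hv1.2 b hbA
        have h0 : v0 b = w b := hv0.2 b hbA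
        have : u b = v1 b := heq1 b (Ne.symm hab)
        rw [h1, ← h0] at this
        exact hub this
      apply hnotin
      constructor
      · intro i hi
        by_cases hia : i = a
        · rw [hia, heq0 a hab]; exact hv0.1 a haA
        · by_cases hib : i = b
          · rw [hib, heq1 b (Ne.symm hab)]; exact hv1.1 b hbA
          · rw [heq1 i hia]; exact hv1.1 i hi
      · intro i hi
        have hia : i ≠ a := by
          intro hEq; rw [hEq] at hi; exact hi haA
        rw [heq1 i hia]; exact hv1.2 i hi

end Near

section Graph

variable {n : ℕ} {m : Fin n → ℕ}

lemma pt_in_S {p : Π i, ZMod (m i)} (hp : p ∈ PtSet n m) : p ∈ SS n m := Or.inl hp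

lemma cube_in_S {w v : Π i, ZMod (m i)} (hw : w ∈ Anch n m) (hv : v ∈ Cube n m w) :
    v ∈ SS n m := Or.inr ⟨w, hw, hv⟩

lemma adjS (hn : 3 ≤ n) (h3 : ∀ i, 3 ∣ m i) {x y : Π i, ZMod (m i)}
    (hx : x ∈ SS n m) (hy : y ∈ SS n m) (hadj : (torusGraph n m).Adj x y) :
    ∃ w ∈ Anch n m, x ∈ Cube n m w ∧ y ∈ Cube n m w := by
  obtain ⟨hne, i, hi, hj⟩ := hadj
  have h0A : ((⟨0, by omega⟩ : Fin n) : ℕ) < n - 1 := by simp; omega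
  have h1A : ((⟨1, by omega⟩ : Fin n) : ℕ) < n - 1 := by simp; omega
  have h01 : (⟨0, by omega⟩ : Fin n) ≠ (⟨1, by omega⟩ : Fin n) := by
    intro hEq
    have := congrArg (fun z : Fin n => (z : ℕ)) hEq
    simp at this
  -- a coordinate in A distinct from i
  have hex : ∃ j : Fin n, (j : ℕ) < n - 1 ∧ j ≠ i := by
    by_cases hc : (⟨0, by omega⟩ : Fin n) = i
    · exact ⟨⟨1, by omega⟩, h1A, fun hEq => h01 (hc ▸ hEq ▸ rfl)⟩
    · exact ⟨⟨0, by omega⟩, h0A, hc⟩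
  have hstep : cc 3 (y i) = cc 3 (x i) + 1 ∨ cc 3 (y i) = cc 3 (x i) - 1 := by
    rcases hi with h | h
    · left; rw [h, cc_add (h3 i), cc_one (h3 i)]
    · right; rw [h, cc_sub (h3 i), cc_one (h3 i)]
  rcases hx with hxP | ⟨w, hw, hxC⟩
  · rcases hy with hyP | ⟨w', hw', hyC⟩
    · exfalso
      rw [hxP i, hyP i] at hstep
      rcases hstep with h | h <;> exact absurd h (by decide)
    · exfalso
      obtain ⟨j0, hj0A, hj0i⟩ := hex
      have hxy : x j0 = y j0 := hj j0 hj0i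
      have h1 := hxP j0
      rw [hxy] at h1
      rcases vertex_c3 h3 hw' hyC j0 hj0A with h | h <;> rw [h1] at h <;>
        exact absurd h (by decide)
  · rcases hy with hyP | ⟨w', hw', hyC⟩
    · exfalso
      obtain ⟨j0, hj0A, hj0i⟩ := hex
      have hxy : x j0 = y j0 := hj j0 hj0i
      have h1 := hyP j0
      rw [← hxy] at h1
      rcases vertex_c3 h3 hw hxC j0 hj0A with h | h <;> rw [h1] at h <;>
        exact absurd h (by decide)
    · -- both cube vertices: the anchors agree
      suffices hww : w = w' by
        exact ⟨w, hw, hxC, hww ▸ hyC⟩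
      have hAg : ∀ j : Fin n, j ≠ i → (j : ℕ) < n - 1 → w j = w' j := by
        intro j hji hjA
        rw [vertex_rec h3 hw hxC j hjA, vertex_rec h3 hw' hyC j hjA, hj j hji]
      by_cases hiA : (i : ℕ) < n - 1
      · -- compare at coordinate i using mod-3 residues
        have hii : w i = w' i := by
          have hcw : cc 3 (w i) = 1 := hw.1 i hiA
          have hcw' : cc 3 (w' i) = 1 := hw'.1 i hiA
          rcases hxC.1 i hiA with h1 | h1 <;> rcases hyC.1 i hiA with h2 | h2 <;>
            rcases hi with h4 | h4
          · -- x i = w i, y i = w' i, y i = x i + 1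
            exfalso
            have : cc 3 (w' i) = cc 3 (w i) + 1 := by
              rw [← h1, ← h2, h4, cc_add (h3 i), cc_one (h3 i)]
            rw [hcw, hcw'] at this
            exact absurd this (by decide)
          · exfalso
            have : cc 3 (w' i) = cc 3 (w i) - 1 := by
              rw [← h1, ← h2, h4, cc_sub (h3 i), cc_one (h3 i)]
            rw [hcw, hcw'] at this
            exact absurd this (by decide)
          · -- x i = w i, y i = w' i + 1, y i = x i + 1 : w' = w
            have : w' i + 1 = w i + 1 := by rw [← h2, h4, h1]
            exact (add_left_injective 1 this).symm
          · -- x i = w i, y i = w' i + 1 = x i - 1 : w' = w - 2 : mod 3 fails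
            exfalso
            have : cc 3 (w' i) = cc 3 (w i) - 2 := by
              have hh : w' i = w i - 2 := by
                have := h4.symm.trans h2
                linear_combination h1 - this
              rw [hh, cc_sub (h3 i), cc3_two (h3 i)]
            rw [hcw, hcw'] at this
            exact absurd this (by decide)
          · -- x i = w i + 1, y i = w' i = x i + 1 : w' = w + 2 : mod 3 fails
            exfalso
            have : cc 3 (w' i) = cc 3 (w i) + 2 := by
              have hh : w' i = w i + 2 := by
                have := h4.symm.trans h2
                linear_combination h1 - this
              rw [hh, cc_add (h3 i), cc3_two (h3 i)]
            rw [hcw, hcw'] at this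
            exact absurd this (by decide)
          · -- x i = w i + 1, y i = w' i = x i - 1 : w' = w
            have : w' i = w i := by
              have := h4.symm.trans h2
              linear_combination h1 - this
            exact this.symm
          · -- x i = w i + 1, y i = w' i + 1 = x i + 1 : mod 3 fails
            exfalso
            have : cc 3 (w' i) = cc 3 (w i) + 1 := by
              have hh : w' i = w i + 1 := by
                have := h4.symm.trans h2
                linear_combination h1 - this
              rw [hh, cc_add (h3 i), cc_one (h3 i)]
            rw [hcw, hcw'] at this
            exact absurd this (by decide)
          · -- x i = w i + 1, y i = w' i + 1 = x i - 1 : mod 3 fails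
            exfalso
            have : cc 3 (w' i) = cc 3 (w i) - 1 := by
              have hh : w' i = w i - 1 := by
                have := h4.symm.trans h2
                linear_combination h1 - this
              rw [hh, cc_sub (h3 i), cc_one (h3 i)]
            rw [hcw, hcw'] at this
            exact absurd this (by decide)
        funext j
        by_cases hji : j = i
        · rw [hji]; exact hii
        · by_cases hjA : (j : ℕ) < n - 1
          · exact hAg j hji hjA
          · rw [← hxC.2 j hjA, ← hyC.2 j hjA, hj j hji]
      · -- i is the last coordinate: impossible, residues mod 3 clash
        exfalso
        have hAg' : ∀ j : Fin n, (j : ℕ) < n - 1 → w j = w' j := by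
          intro j hjA
          have hji : j ≠ i := by
            intro hEq; rw [hEq] at hjA; exact hiA hjA
          exact hAg j hji hjA
        have hσ : sg n m w = sg n m w' :=
          Finset.sum_congr rfl fun j hjA => by rw [hAg' j (mem_AA.mp hjA)]
        have hcw : cc 3 (x i) = 1 + emb (sg n m w) := by
          rw [hxC.2 i hiA]; exact hw.2 i hiA
        have hcw' : cc 3 (y i) = 1 + emb (sg n m w') := by
          rw [hyC.2 i hiA]; exact hw'.2 i hiA
        rw [hcw, hcw', hσ] at hstep
        rcases hstep with h | h
        · have : (0 : ZMod 3) = 1 := by linear_combination h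
          exact absurd this (by decide)
        · have : (0 : ZMod 3) = -1 := by linear_combination h
          exact absurd this (by decide)

end Graph

section Comp

variable {n : ℕ} {m : Fin n → ℕ}

lemma walk_cube (hn : 3 ≤ n) (h3 : ∀ i, 3 ∣ m i) {w : Π i, ZMod (m i)}
    (hw : w ∈ Anch n m) :
    ∀ (c d : ↥(SS n m)) (_ : ((torusGraph n m).induce (SS n m)).Walk c d),
      (c : Π i, ZMod (m i)) ∈ Cube n m w → (d : Π i, ZMod (m i)) ∈ Cube n m w := by
  intro c d p
  induction p with
  | nil => exact id
  | @cons a b _ h q ih =>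
    intro hc
    have hadj : (torusGraph n m).Adj (a : Π i, ZMod (m i)) b := h
    obtain ⟨w', hw', ha', hb'⟩ := adjS hn h3 a.2 b.2 hadj
    have hww : w = w' := anch_eq_of h3 hw hw' hc ha'
    exact ih (hww ▸ hb')

lemma walk_pt (hn : 3 ≤ n) (h3 : ∀ i, 3 ∣ m i) {p : Π i, ZMod (m i)}
    (hp : p ∈ PtSet n m) :
    ∀ (c d : ↥(SS n m)) (_ : ((torusGraph n m).induce (SS n m)).Walk c d),
      (c : Π i, ZMod (m i)) = p → (d : Π i, ZMod (m i)) = p := by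
  intro c d q
  induction q with
  | nil => exact id
  | @cons a b _ h q ih =>
    intro hc
    exfalso
    have hadj : (torusGraph n m).Adj (a : Π i, ZMod (m i)) b := h
    obtain ⟨w', hw', ha', _⟩ := adjS hn h3 a.2 b.2 hadj
    rw [hc] at ha'
    exact pt_not_cube hn h3 hp hw' ha'

lemma cube_reach (hn : 3 ≤ n) (h3 : ∀ i, 3 ∣ m i) {w : Π i, ZMod (m i)}
    (hw : w ∈ Anch n m) :
    ∀ (N : ℕ) (v v' : Π i, ZMod (m i)) (hv : v ∈ Cube n m w) (hv' : v' ∈ Cube n m w),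
      (Finset.univ.filter fun i => v i ≠ v' i).card ≤ N →
      ((torusGraph n m).induce (SS n m)).Reachable
        ⟨v, cube_in_S hw hv⟩ ⟨v', cube_in_S hw hv'⟩ := by
  intro N
  induction N with
  | zero =>
    intro v v' hv hv' hcard
    have hvv : v = v' := by
      funext i
      by_contra hne
      have hmem : i ∈ Finset.univ.filter fun i => v i ≠ v' i := by simp [hne]
      rw [Finset.card_eq_zero.mp (Nat.le_zero.mp hcard)] at hmem
      exact absurd hmem (Finset.notMem_empty i)
    subst hvv
    rfl
  | succ N ih =>
    intro v v' hv hv' hcard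
    by_cases hvv : v = v'
    · subst hvv; rfl
    · have hex : ∃ i, v i ≠ v' i := by
        by_contra hcon
        push_neg at hcon
        exact hvv (funext hcon)
      obtain ⟨i₀, hi₀⟩ := hex
      have hiA : (i₀ : ℕ) < n - 1 := by
        by_contra hA
        rw [hv.2 i₀ hA, ← hv'.2 i₀ hA] at hi₀
        exact hi₀ rfl
      classical
      set v'' : Π i, ZMod (m i) := Function.update v i₀ (v' i₀) with hv''def
      have hvi : v'' i₀ = v' i₀ := by rw [hv''def]; exact Function.update_self _ _ _
      have hvne : ∀ i, i ≠ i₀ → v'' i = v i := by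
        intro i hii; rw [hv''def]; exact Function.update_of_ne hii _ _
      have hv''C : v'' ∈ Cube n m w := by
        constructor
        · intro i hi
          by_cases hii : i = i₀
          · subst hii; rw [hvi]; exact hv'.1 i hi
          · rw [hvne i hii]; exact hv.1 i hi
        · intro i hi
          have hii : i ≠ i₀ := by
            intro hEq; rw [hEq] at hi; exact hi hiA
          rw [hvne i hii]; exact hv.2 i hi
      have hadj : (torusGraph n m).Adj v v'' := by
        refine ⟨?_, i₀, ?_, ?_⟩
        · intro hEq
          have := congrFun hEq i₀
          rw [hvi] at this
          exact hi₀ this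
        · rw [hvi]
          rcases hv.1 i₀ hiA with h1 | h1 <;> rcases hv'.1 i₀ hiA with h2 | h2
          · exact absurd (h1.trans h2.symm) hi₀
          · left; rw [h2, h1]
          · right; rw [h2, h1]; ring
          · exact absurd (h1.trans h2.symm) hi₀
        · intro j hj
          exact (hvne j hj).symm
      have hstep : ((torusGraph n m).induce (SS n m)).Adj
          ⟨v, cube_in_S hw hv⟩ ⟨v'', cube_in_S hw hv''C⟩ := hadj
      have hss : (Finset.univ.filter fun i => v'' i ≠ v' i) ⊆
          (Finset.univ.filter fun i => v i ≠ v' i).erase i₀ := by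
        intro j hj
        simp only [Finset.mem_filter, Finset.mem_univ, true_and] at hj
        have hji : j ≠ i₀ := by
          intro hEq
          rw [hEq, hvi] at hj
          exact hj rfl
        refine Finset.mem_erase.mpr ⟨hji, ?_⟩
        simp only [Finset.mem_filter, Finset.mem_univ, true_and]
        rw [← hvne j hji]
        exact hj
      have hcard' : (Finset.univ.filter fun i => v'' i ≠ v' i).card ≤ N := by
        have h1 := Finset.card_le_card hss
        have h2 : ((Finset.univ.filter fun i => v i ≠ v' i).erase i₀).card =
            (Finset.univ.filter fun i => v i ≠ v' i).card - 1 :=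
          Finset.card_erase_of_mem (by simp [hi₀])
        omega
      exact hstep.reachable.trans (ih v'' v' hv''C hv' hcard')

lemma comp_of_cube (hn : 3 ≤ n) (h3 : ∀ i, 3 ∣ m i) {w v : Π i, ZMod (m i)}
    (hw : w ∈ Anch n m) (hv : v ∈ Cube n m w) (hvS : v ∈ SS n m) :
    tCompVerts n m (SS n m)
      (((torusGraph n m).induce (SS n m)).connectedComponentMk ⟨v, hvS⟩) = Cube n m w := by
  ext x
  constructor
  · rintro ⟨hxS, hcomp⟩
    obtain ⟨q⟩ := (SimpleGraph.ConnectedComponent.eq.mp hcomp).symm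
    exact walk_cube hn h3 hw _ _ q hv
  · intro hx
    refine ⟨cube_in_S hw hx, ?_⟩
    exact SimpleGraph.ConnectedComponent.sound
      (cube_reach hn h3 hw (Finset.univ.filter fun i => x i ≠ v i).card x v hx hv le_rfl)

lemma comp_of_pt (hn : 3 ≤ n) (h3 : ∀ i, 3 ∣ m i) {p : Π i, ZMod (m i)}
    (hp : p ∈ PtSet n m) (hpS : p ∈ SS n m) :
    tCompVerts n m (SS n m)
      (((torusGraph n m).induce (SS n m)).connectedComponentMk ⟨p, hpS⟩) = {p} := by
  ext x
  constructor
  · rintro ⟨hxS, hcomp⟩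
    obtain ⟨q⟩ := (SimpleGraph.ConnectedComponent.eq.mp hcomp).symm
    exact walk_pt hn h3 hp _ _ q rfl
  · intro hx
    rw [Set.mem_singleton_iff] at hx
    subst hx
    exact ⟨hpS, rfl⟩

lemma comp_disj {S : Set (Π i, ZMod (m i))}
    {H1 H2 : ((torusGraph n m).induce S).ConnectedComponent} {v : Π i, ZMod (m i)}
    (h1 : v ∈ tCompVerts n m S H1) (h2 : v ∈ tCompVerts n m S H2) : H1 = H2 := by
  obtain ⟨ha, hc1⟩ := h1
  obtain ⟨hb, hc2⟩ := h2
  rw [← hc1, ← hc2]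

end Comp

section Aux

variable {n : ℕ} {m : Fin n → ℕ}

lemma one_ne_zero' {N : ℕ} (h3 : 3 ∣ N) : (1 : ZMod N) ≠ 0 := by
  intro hEq
  have := congrArg (cc 3) hEq
  rw [cc_one h3, cc_zero h3] at this
  exact absurd this (by decide)

lemma i0A (hn : 3 ≤ n) : ((⟨0, by omega⟩ : Fin n) : ℕ) < n - 1 := by simp; omega

lemma cube_eq_image (hn : 3 ≤ n) (hpos : ∀ i, 0 < m i) (w : Π i, ZMod (m i)) :
    ∃ wI : Fin n → ℤ,
      (fun v : Fin n → ℤ => fun i => ((v i : ℤ) : ZMod (m i))) '' translateCube n (AA n) wI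
        = Cube n m w := by
  classical
  refine ⟨fun i => ((w i).val : ℤ), ?_⟩
  have hcast : ∀ i, ((((w i).val : ℤ)) : ZMod (m i)) = w i := by
    intro i
    haveI : NeZero (m i) := ⟨(hpos i).ne'⟩
    rw [Int.cast_natCast]
    exact ZMod.natCast_rightInverse (w i)
  ext x
  constructor
  · rintro ⟨t, ⟨ht1, ht2⟩, rfl⟩
    constructor
    · intro i hi
      rcases ht1 i (mem_AA.mpr hi) with h | h
      · left
        show ((t i : ℤ) : ZMod (m i)) = w i
        rw [h]
        exact hcast i
      · right
        show ((t i : ℤ) : ZMod (m i)) = w i + 1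
        rw [h]
        rw [Int.cast_add, Int.cast_one]
        rw [show ((fun i => ((w i).val : ℤ)) i : ℤ) = ((w i).val : ℤ) from rfl]
        rw [hcast i]
    · intro i hi
      have hni : i ∉ AA n := fun hc => hi (mem_AA.mp hc)
      show ((t i : ℤ) : ZMod (m i)) = w i
      rw [ht2 i hni]
      exact hcast i
  · intro hx
    refine ⟨fun i => if x i = w i then ((w i).val : ℤ) else ((w i).val : ℤ) + 1, ⟨?_, ?_⟩, ?_⟩
    · intro i _
      by_cases hc : x i = w i
      · left
        show (if x i = w i then ((w i).val : ℤ) else ((w i).val : ℤ) + 1) = ((w i).val : ℤ)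
        rw [if_pos hc]
      · right
        show (if x i = w i then ((w i).val : ℤ) else ((w i).val : ℤ) + 1)
          = ((w i).val : ℤ) + 1
        rw [if_neg hc]
    · intro i hi
      have hi' : ¬((i : ℕ) < n - 1) := fun hc => hi (mem_AA.mpr hc)
      show (if x i = w i then ((w i).val : ℤ) else ((w i).val : ℤ) + 1) = ((w i).val : ℤ)
      rw [if_pos (hx.2 i hi')]
    · funext i
      show (((if x i = w i then ((w i).val : ℤ) else ((w i).val : ℤ) + 1) : ℤ)
        : ZMod (m i)) = x i
      by_cases hc : x i = w i
      · rw [if_pos hc, hcast i, hc]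
      · rw [if_neg hc, Int.cast_add, Int.cast_one, hcast i]
        have hiA : (i : ℕ) < n - 1 := by
          by_contra hi'
          exact hc (hx.2 i hi')
        rcases hx.1 i hiA with h | h
        · exact absurd h hc
        · exact h.symm

lemma mem_translateCube_self (wI : Fin n → ℤ) : wI ∈ translateCube n (AA n) wI :=
  ⟨fun i _ => Or.inl rfl, fun _ _ => rfl⟩

lemma image_not_singleton (hn : 3 ≤ n) (h3 : ∀ i, 3 ∣ m i) (wI : Fin n → ℤ)
    (p : Π i, ZMod (m i)) :
    (fun v : Fin n → ℤ => fun i => ((v i : ℤ) : ZMod (m i))) '' translateCube n (AA n) wI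
      ≠ {p} := by
  classical
  intro hEq
  set i₀ : Fin n := ⟨0, by omega⟩ with hi₀def
  have hi₀A : i₀ ∈ AA n := mem_AA.mpr (i0A hn)
  have h1 : (fun i => ((wI i : ℤ) : ZMod (m i))) ∈
      (fun v : Fin n → ℤ => fun i => ((v i : ℤ) : ZMod (m i))) '' translateCube n (AA n) wI :=
    ⟨wI, mem_translateCube_self wI, rfl⟩
  set t2 : Fin n → ℤ := Function.update wI i₀ (wI i₀ + 1) with ht2def
  have ht2 : t2 ∈ translateCube n (AA n) wI := by
    constructor
    · intro i _
      by_cases hc : i = i₀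
      · right; rw [hc, ht2def, Function.update_self]
      · left; rw [ht2def, Function.update_of_ne hc]
    · intro i hi
      have hc : i ≠ i₀ := fun hEq2 => hi (hEq2 ▸ hi₀A)
      rw [ht2def, Function.update_of_ne hc]
  have h2 : (fun i => ((t2 i : ℤ) : ZMod (m i))) ∈
      (fun v : Fin n → ℤ => fun i => ((v i : ℤ) : ZMod (m i))) '' translateCube n (AA n) wI :=
    ⟨t2, ht2, rfl⟩
  rw [hEq, Set.mem_singleton_iff] at h1 h2
  have := congrFun (h1.trans h2.symm) i₀
  rw [ht2def, Function.update_self] at this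
  push_cast at this
  exact one_ne_zero' (h3 i₀) (by linear_combination -this)

lemma cube_not_singleton (hn : 3 ≤ n) (h3 : ∀ i, 3 ∣ m i) (w p : Π i, ZMod (m i)) :
    Cube n m w ≠ {p} := by
  classical
  intro hEq
  set i₀ : Fin n := ⟨0, by omega⟩ with hi₀def
  have h1 : w ∈ Cube n m w := cube_self w
  set v2 : Π i, ZMod (m i) := Function.update w i₀ (w i₀ + 1) with hv2def
  have h2 : v2 ∈ Cube n m w := by
    constructor
    · intro i _
      by_cases hc : i = i₀
      · right; rw [hc, hv2def, Function.update_self]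
      · left; rw [hv2def, Function.update_of_ne hc]
    · intro i hi
      have hc : i ≠ i₀ := fun hEq2 => hi (hEq2 ▸ (i0A hn))
      rw [hv2def, Function.update_of_ne hc]
  rw [hEq, Set.mem_singleton_iff] at h1 h2
  have := congrFun (h2.trans h1.symm) i₀
  rw [hv2def, Function.update_self] at this
  exact one_ne_zero' (h3 i₀) (by linear_combination this)

lemma p0_mem (h3 : ∀ i, 3 ∣ m i) : (fun i => (0 : ZMod (m i))) ∈ PtSet n m :=
  fun i => cc_zero (h3 i)

lemma w0_mem (h3 : ∀ i, 3 ∣ m i) (h6 : ∀ i : Fin n, (i : ℕ) < n - 1 → 6 ∣ m i) :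
    (fun i => (1 : ZMod (m i))) ∈ Anch n m := by
  have hsg : sg n m (fun i => (1 : ZMod (m i))) = 0 := by
    rw [sg]
    rw [Finset.sum_congr rfl (fun i hi => ?_), Finset.sum_const, smul_zero]
    have h2 : 2 ∣ m i := dvd_trans (by norm_num) (h6 i (mem_AA.mp hi))
    rw [cc_one h2]
    decide
  constructor
  · intro i hi
    exact cc_one (h3 i)
  · intro i hi
    rw [hsg, cc_one (h3 i)]
    decide

lemma comp_classify (hn : 3 ≤ n) (h3 : ∀ i, 3 ∣ m i)
    (H : ((torusGraph n m).induce (SS n m)).ConnectedComponent) :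
    (∃ p ∈ PtSet n m, tCompVerts n m (SS n m) H = {p}) ∨
      (∃ w ∈ Anch n m, tCompVerts n m (SS n m) H = Cube n m w) := by
  obtain ⟨x, hx⟩ := H.exists_rep
  rcases x.2 with hP | ⟨w, hw, hC⟩
  · left
    exact ⟨x.1, hP, by rw [← hx]; exact comp_of_pt hn h3 hP x.2⟩
  · right
    exact ⟨w, hw, by rw [← hx]; exact comp_of_cube hn h3 hw hC x.2⟩

end Aux

section Master

variable {n : ℕ} {m : Fin n → ℕ}

theorem master (hn : 3 ≤ n) (h3 : ∀ i, 3 ∣ m i)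
    (h6 : ∀ i : Fin n, (i : ℕ) < n - 1 → 6 ∣ m i) (hpos : ∀ i, 0 < m i) :
    ∃ (S : Set (Π i : Fin n, ZMod (m i))) (A : Finset (Fin n)), A.card = n - 1 ∧
      letI π : (Fin n → ℤ) → Π i : Fin n, ZMod (m i) :=
        fun v => fun i => ((v i : ℤ) : ZMod (m i))
      (∀ H : ((torusGraph n m).induce S).ConnectedComponent,
        (∃ w : Fin n → ℤ, tCompVerts n m S H = π '' translateCube n A w) ∨
        (∃ v, tCompVerts n m S H = {v})) ∧
      (∃ H : ((torusGraph n m).induce S).ConnectedComponent, ∃ w : Fin n → ℤ,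
        tCompVerts n m S H = π '' translateCube n A w) ∧
      (∃ H : ((torusGraph n m).induce S).ConnectedComponent, ∃ v,
        tCompVerts n m S H = {v}) ∧
      (∀ u : Π i, ZMod (m i), ∃! H : ((torusGraph n m).induce S).ConnectedComponent,
        ((∃ w : Fin n → ℤ, tCompVerts n m S H = π '' translateCube n A w) ∧
          ttrhoSet n m u (tCompVerts n m S H) ≤ 1) ∨
        ((∃ v, tCompVerts n m S H = {v}) ∧
          ttrhoSet n m u (tCompVerts n m S H) ≤ n - 2)) ∧
      (∀ u : Π i, ZMod (m i), ∀ H : ((torusGraph n m).induce S).ConnectedComponent,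
        (((∃ w : Fin n → ℤ, tCompVerts n m S H = π '' translateCube n A w) ∧
            ttrhoSet n m u (tCompVerts n m S H) ≤ 1) ∨
          ((∃ v, tCompVerts n m S H = {v}) ∧
            ttrhoSet n m u (tCompVerts n m S H) ≤ n - 2)) →
        ∃! w, w ∈ tCompVerts n m S H ∧
          ttrho n m u w = ttrhoSet n m u (tCompVerts n m S H)) := by
  classical
  refine ⟨SS n m, AA n, AA_card hn, ?_, ?_, ?_, ?_, ?_⟩
  · -- every component is a cube image or a singleton
    intro H
    rcases comp_classify hn h3 H with ⟨p, hpP, hH⟩ | ⟨w, hwA, hH⟩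
    · exact Or.inr ⟨p, hH⟩
    · obtain ⟨wI, hwI⟩ := cube_eq_image hn hpos w
      exact Or.inl ⟨wI, hH.trans hwI.symm⟩
  · -- a cube component exists
    have hw0 := w0_mem h3 h6
    refine ⟨((torusGraph n m).induce (SS n m)).connectedComponentMk
      ⟨fun i => (1 : ZMod (m i)), cube_in_S hw0 (cube_self _)⟩, ?_⟩
    obtain ⟨wI, hwI⟩ := cube_eq_image hn hpos (fun i => (1 : ZMod (m i)))
    exact ⟨wI, (comp_of_cube hn h3 hw0 (cube_self _) _).trans hwI.symm⟩
  · -- a singleton component exists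
    have hp0 := p0_mem (n := n) h3
    exact ⟨((torusGraph n m).induce (SS n m)).connectedComponentMk
      ⟨fun i => (0 : ZMod (m i)), pt_in_S hp0⟩, fun i => (0 : ZMod (m i)),
      comp_of_pt hn h3 hp0 _⟩
  · -- the spheres partition the torus
    intro u
    by_cases hZ : Zf n m u ≤ 1
    · -- u is covered by a unique cube sphere
      obtain ⟨w, hwA, v, hvC, hv1⟩ := covc_ex hn h3 h6 hZ
      set H := ((torusGraph n m).induce (SS n m)).connectedComponentMk
        ⟨v, cube_in_S hwA hvC⟩ with hHdef
      have hHC : tCompVerts n m (SS n m) H = Cube n m w := comp_of_cube hn h3 hwA hvC _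
      obtain ⟨wI, hwI⟩ := cube_eq_image hn hpos w
      refine ⟨H, Or.inl ⟨⟨wI, hHC.trans hwI.symm⟩, ?_⟩, ?_⟩
      · rw [hHC]
        exact le_trans (tts_le hvC) hv1
      · intro H' hH'
        rcases comp_classify hn h3 H' with ⟨p', hp'P, hH'e⟩ | ⟨w', hw'A, hH'e⟩
        · exfalso
          rcases hH' with ⟨⟨wI', himg⟩, _⟩ | ⟨_, hdist⟩
          · exact image_not_singleton hn h3 wI' p' (himg.symm.trans hH'e)
          · rw [hH'e, tts_singleton] at hdist
            exact covp_not hn h3 hZ p' ⟨hp'P, hdist⟩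
        · rcases hH' with ⟨_, hdist⟩ | ⟨⟨v', hsing⟩, _⟩
          · rw [hH'e] at hdist
            obtain ⟨s, hsC, hse⟩ := tts_exists (u := u) ⟨w', cube_self w'⟩
            have hcov' : CovC n m u w' := ⟨hw'A, s, hsC, by omega⟩
            have hww : w' = w := covc_unique hn h3 h6 hcov' ⟨hwA, v, hvC, hv1⟩
            have hvmem : v ∈ tCompVerts n m (SS n m) H' := by
              rw [hH'e, hww]; exact hvC
            have hvmem2 : v ∈ tCompVerts n m (SS n m) H := by
              rw [hHC]; exact hvC
            exact comp_disj hvmem hvmem2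
          · exact absurd (hH'e.symm.trans hsing) (cube_not_singleton hn h3 w' v')
    · -- u is covered by a unique point sphere
      push_neg at hZ
      obtain ⟨p, ⟨hpP, hpd⟩, hpu⟩ := covp_exu hn h3 (u := u) (by omega)
      set H := ((torusGraph n m).induce (SS n m)).connectedComponentMk
        ⟨p, pt_in_S hpP⟩ with hHdef
      have hHC : tCompVerts n m (SS n m) H = {p} := comp_of_pt hn h3 hpP _
      refine ⟨H, Or.inr ⟨⟨p, hHC⟩, ?_⟩, ?_⟩
      · rw [hHC, tts_singleton]
        exact hpd
      · intro H' hH'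
        rcases comp_classify hn h3 H' with ⟨p', hp'P, hH'e⟩ | ⟨w', hw'A, hH'e⟩
        · rcases hH' with ⟨⟨wI', himg⟩, _⟩ | ⟨_, hdist⟩
          · exact absurd (himg.symm.trans hH'e) (image_not_singleton hn h3 wI' p')
          · rw [hH'e, tts_singleton] at hdist
            have : p' = p := hpu p' ⟨hp'P, hdist⟩
            have hpmem : p ∈ tCompVerts n m (SS n m) H' := by
              rw [hH'e, this]; rfl
            have hpmem2 : p ∈ tCompVerts n m (SS n m) H := by
              rw [hHC]; rfl
            exact comp_disj hpmem hpmem2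
        · exfalso
          rcases hH' with ⟨_, hdist⟩ | ⟨⟨v', hsing⟩, _⟩
          · rw [hH'e] at hdist
            obtain ⟨s, hsC, hse⟩ := tts_exists (u := u) ⟨w', cube_self w'⟩
            exact covc_not hn h3 hZ w' ⟨hw'A, s, hsC, by omega⟩
          · exact absurd (hH'e.symm.trans hsing) (cube_not_singleton hn h3 w' v')
  · -- unique nearest vertex
    intro u H hH
    rcases comp_classify hn h3 H with ⟨p', hp'P, hH'e⟩ | ⟨w', hw'A, hH'e⟩
    · rw [hH'e]
      refine ⟨p', ⟨rfl, (tts_singleton u p').symm ▸ rfl⟩, ?_⟩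
      rintro y ⟨hy, -⟩
      exact hy
    · rw [hH'e]
      rcases hH with ⟨_, hdist⟩ | ⟨⟨v', hsing⟩, _⟩
      · rw [hH'e] at hdist
        exact near_cube hn h3 h6 hw'A hdist
      · exact absurd (hH'e.symm.trans hsing) (cube_not_singleton hn h3 w' v')

end Master

end St6

/-- In the toroidal grid `C_{6k₁} □ ⋯ □ C_{6k_{n−1}} □ C_{3k_n}`
(`n ≥ 3`) there is a set `S` whose induced components are the reductions of translates
of a fixed binary `(n−1)`-cube and single vertices (both kinds occurring), such that the
torus truncated spheres of radius `1` around the cube components and radius `n−2` around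
the singleton components partition the vertex set, with unique nearest central vertex. -/
theorem stmt_6 (n : ℕ) (hn : 3 ≤ n) (k : Fin n → ℕ) (hk : ∀ i, 1 ≤ k i) :
    ∃ (S : Set (Π i : Fin n, ZMod ((fun i : Fin n =>
          if (i : ℕ) < n - 1 then 6 * k i else 3 * k i) i)))
      (A : Finset (Fin n)), A.card = n - 1 ∧
      letI m : Fin n → ℕ := fun i : Fin n => if (i : ℕ) < n - 1 then 6 * k i else 3 * k i
      letI π : (Fin n → ℤ) → Π i : Fin n, ZMod (m i) :=
        fun v => fun i => ((v i : ℤ) : ZMod (m i))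
      (∀ H : ((torusGraph n m).induce S).ConnectedComponent,
        (∃ w : Fin n → ℤ, tCompVerts n m S H = π '' translateCube n A w) ∨
        (∃ v, tCompVerts n m S H = {v})) ∧
      (∃ H : ((torusGraph n m).induce S).ConnectedComponent, ∃ w : Fin n → ℤ,
        tCompVerts n m S H = π '' translateCube n A w) ∧
      (∃ H : ((torusGraph n m).induce S).ConnectedComponent, ∃ v,
        tCompVerts n m S H = {v}) ∧
      (∀ u : Π i, ZMod (m i), ∃! H : ((torusGraph n m).induce S).ConnectedComponent,
        ((∃ w : Fin n → ℤ, tCompVerts n m S H = π '' translateCube n A w) ∧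
          ttrhoSet n m u (tCompVerts n m S H) ≤ 1) ∨
        ((∃ v, tCompVerts n m S H = {v}) ∧
          ttrhoSet n m u (tCompVerts n m S H) ≤ n - 2)) ∧
      (∀ u : Π i, ZMod (m i), ∀ H : ((torusGraph n m).induce S).ConnectedComponent,
        (((∃ w : Fin n → ℤ, tCompVerts n m S H = π '' translateCube n A w) ∧
            ttrhoSet n m u (tCompVerts n m S H) ≤ 1) ∨
          ((∃ v, tCompVerts n m S H = {v}) ∧
            ttrhoSet n m u (tCompVerts n m S H) ≤ n - 2)) →
        ∃! w, w ∈ tCompVerts n m S H ∧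
          ttrho n m u w = ttrhoSet n m u (tCompVerts n m S H)) := by
  have h3 : ∀ i : Fin n, 3 ∣ (fun i : Fin n =>
      if (i : ℕ) < n - 1 then 6 * k i else 3 * k i) i := by
    intro i
    by_cases hi : (i : ℕ) < n - 1
    · simp only [if_pos hi]
      exact Dvd.dvd.mul_right (by norm_num) _
    · simp only [if_neg hi]
      exact Dvd.dvd.mul_right dvd_rfl _
  have h6 : ∀ i : Fin n, (i : ℕ) < n - 1 → 6 ∣ (fun i : Fin n =>
      if (i : ℕ) < n - 1 then 6 * k i else 3 * k i) i := by
    intro i hi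
    simp only [if_pos hi]
    exact Dvd.dvd.mul_right dvd_rfl _
  have hpos : ∀ i : Fin n, 0 < (fun i : Fin n =>
      if (i : ℕ) < n - 1 then 6 * k i else 3 * k i) i := by
    intro i
    have := hk i
    by_cases hi : (i : ℕ) < n - 1
    · simp only [if_pos hi]; omega
    · simp only [if_neg hi]; omega
  exact St6.master hn h3 h6 hpos
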